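/- Let p > q be coprime natural numbers with p/q = [a₁,...,a_k] and p/(p−q) = [b₁,...,b_l] as Hirzebruch–Jung continued fractions with all entries ≥ 2. Then p²/(pq−1) = [a₁, ..., a_{k−1}, a_k + b_l, b_{l−1}, ..., b₁]. -/

import Mathlib

/-- Hirzebruch–Jung continued fraction `[a₁,…,a_k] = a₁ - 1/(a₂ - 1/(⋯ - 1/a_k))`.
Note `1/0 = 0` in `ℚ`, so `hj [a] = a`. -/
def hj : List ℚ → ℚ
  | [] => 0
  | a :: l => a - 1 / hj l

/-- HJ continued fraction of a list of naturals. -/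
def hjN (l : List ℕ) : ℚ := hj (l.map (fun x => (x : ℚ)))

@[ext] structure M2 where
  a : ℤ
  b : ℤ
  c : ℤ
  d : ℤ

namespace M2

def mul (X Y : M2) : M2 :=
  ⟨X.a*Y.a + X.b*Y.c, X.a*Y.b + X.b*Y.d, X.c*Y.a + X.d*Y.c, X.c*Y.b + X.d*Y.d⟩

def one : M2 := ⟨1,0,0,1⟩

theorem mul_assoc' (X Y Z : M2) : (X.mul Y).mul Z = X.mul (Y.mul Z) := by
  ext <;> simp [mul] <;> ring

theorem one_mul' (X : M2) : one.mul X = X := by ext <;> simp [mul, one]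
theorem mul_one' (X : M2) : X.mul one = X := by ext <;> simp [mul, one]

def flip (X : M2) : M2 := ⟨X.a, -X.c, -X.b, X.d⟩

theorem flip_mul (X Y : M2) : flip (X.mul Y) = (flip Y).mul (flip X) := by
  ext <;> simp [mul, flip] <;> ring

end M2

def mOf (x : ℕ) : M2 := ⟨(x:ℤ), -1, 1, 0⟩

def PM : List ℕ → M2
  | [] => M2.one
  | x :: l => (mOf x).mul (PM l)

theorem PM_cons (x : ℕ) (l : List ℕ) : PM (x :: l) = (mOf x).mul (PM l) := rfl

theorem PM_append (l₁ l₂ : List ℕ) : PM (l₁ ++ l₂) = (PM l₁).mul (PM l₂) := by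
  induction l₁ with
  | nil => simp [PM, M2.one_mul']
  | cons x l ih => simp [PM_cons, List.cons_append, ih, M2.mul_assoc']

theorem PM_single (x : ℕ) : PM [x] = mOf x := by
  rw [PM_cons]; exact M2.mul_one' _

theorem flip_mOf (x : ℕ) : (mOf x).flip = mOf x := by
  simp [mOf, M2.flip]

theorem PM_reverse (l : List ℕ) : PM l.reverse = (PM l).flip := by
  induction l with
  | nil => ext <;> simp [PM, M2.one, M2.flip]
  | cons x l ih =>
      rw [List.reverse_cons, PM_append, ih, PM_single, PM_cons, M2.flip_mul, flip_mOf]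

theorem PM_det (l : List ℕ) : (PM l).a * (PM l).d - (PM l).b * (PM l).c = 1 := by
  induction l with
  | nil => simp [PM, M2.one]
  | cons x l ih =>
      rw [PM_cons]
      simp only [M2.mul, mOf]
      linear_combination ih

def MInv (X : M2) : Prop :=
  0 ≤ X.c ∧ X.c < X.a ∧ X.b ≤ 0 ∧ X.b ≤ X.d ∧ 1 ≤ X.a + X.b ∧
    0 ≤ X.c + X.d ∧ X.c + X.d ≤ X.a + X.b

theorem PM_inv (l : List ℕ) (h2 : ∀ x ∈ l, 2 ≤ x) : MInv (PM l) := by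
  induction l with
  | nil => exact ⟨by norm_num [PM, M2.one], by norm_num [PM, M2.one], by norm_num [PM, M2.one],
      by norm_num [PM, M2.one], by norm_num [PM, M2.one], by norm_num [PM, M2.one],
      by norm_num [PM, M2.one]⟩
  | cons x l ih =>
      obtain ⟨h1, h2', h3, h4, h5, h6, h7⟩ := ih (fun y hy => h2 y (List.mem_cons_of_mem _ hy))
      have hx : (2:ℤ) ≤ (x:ℤ) := by exact_mod_cast h2 x (List.mem_cons_self)
      have e1 : 2*(PM l).a ≤ (x:ℤ)*(PM l).a :=
        mul_le_mul_of_nonneg_right hx (by linarith)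
      have e2 : (x:ℤ)*(PM l).b ≤ 2*(PM l).b :=
        mul_le_mul_of_nonpos_right hx h3
      have e3 : 2*((PM l).a + (PM l).b) ≤ (x:ℤ)*((PM l).a + (PM l).b) :=
        mul_le_mul_of_nonneg_right hx (by linarith)
      have e4 : (x:ℤ)*((PM l).a + (PM l).b) = (x:ℤ)*(PM l).a + (x:ℤ)*(PM l).b := by ring
      rw [PM_cons]
      simp only [MInv, M2.mul, mOf]
      refine ⟨by linarith, by linarith, by linarith, by linarith, by linarith,
        by linarith, by linarith⟩

theorem PM_b_neg (l : List ℕ) (h2 : ∀ x ∈ l, 2 ≤ x) (hl : l ≠ []) : (PM l).b ≤ -1 := by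
  induction l with
  | nil => simp at hl
  | cons x l ih =>
      have hx : (2:ℤ) ≤ (x:ℤ) := by exact_mod_cast h2 x (List.mem_cons_self)
      have h2' : ∀ y ∈ l, 2 ≤ y := fun y hy => h2 y (List.mem_cons_of_mem _ hy)
      rw [PM_cons]
      simp only [M2.mul, mOf]
      rcases eq_or_ne l [] with rfl | hne
      · norm_num [PM, M2.one]
      · have hb := ih h2' hne
        obtain ⟨h1, h2'', h3, h4, h5, h6, h7⟩ := PM_inv l h2'
        have e2 : (x:ℤ)*(PM l).b ≤ 2*(PM l).b :=
          mul_le_mul_of_nonpos_right hx h3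
        linarith

theorem PM_c_pos (l : List ℕ) (h2 : ∀ x ∈ l, 2 ≤ x) (hl : l ≠ []) : 1 ≤ (PM l).c := by
  induction l with
  | nil => simp at hl
  | cons x l _ =>
      have h2' : ∀ y ∈ l, 2 ≤ y := fun y hy => h2 y (List.mem_cons_of_mem _ hy)
      obtain ⟨h1, h2'', _⟩ := PM_inv l h2'
      rw [PM_cons]
      simp only [M2.mul, mOf]
      linarith

theorem hj_cons (a : ℚ) (l : List ℚ) : hj (a :: l) = a - 1 / hj l := rfl

theorem hjN_eq (l : List ℕ) (h2 : ∀ x ∈ l, 2 ≤ x) :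
    hjN l = ((PM l).a : ℚ) / ((PM l).c : ℚ) := by
  induction l with
  | nil => norm_num [hjN, hj, PM, M2.one]
  | cons x l ih =>
      have h2' : ∀ y ∈ l, 2 ≤ y := fun y hy => h2 y (List.mem_cons_of_mem _ hy)
      obtain ⟨h1, h2'', _⟩ := PM_inv l h2'
      have ha : ((PM l).a : ℚ) ≠ 0 := by
        have : (0:ℤ) < (PM l).a := lt_of_le_of_lt h1 h2''
        exact_mod_cast this.ne'
      have ih' := ih h2'
      have hcons : hjN (x :: l) = (x:ℚ) - 1 / hjN l := rfl
      rw [hcons, ih', one_div_div, PM_cons]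
      simp only [M2.mul, mOf]
      push_cast
      field_simp
      rw [mul_zero, add_zero, mul_div_cancel_left₀ _ ha]
      ring

theorem frac_eq {a c : ℤ} {p q : ℕ} (hq : 0 < q) (hc : 0 < c)
    (hcop : IsCoprime a c) (hpq : Nat.Coprime p q)
    (h : (a : ℚ) / (c : ℚ) = (p : ℚ) / (q : ℚ)) : a = (p:ℤ) ∧ c = (q:ℤ) := by
  have hc' : ((c:ℤ):ℚ) ≠ 0 := by exact_mod_cast hc.ne'
  have hq' : ((q:ℕ):ℚ) ≠ 0 := by exact_mod_cast hq.ne'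
  have hcross : a * (q:ℤ) = (p:ℤ) * c := by
    have := (div_eq_div_iff hc' hq').mp h
    exact_mod_cast this
  have hdq : c ∣ (q:ℤ) := by
    refine hcop.symm.dvd_of_dvd_mul_right ⟨(p:ℤ), ?_⟩
    linarith [hcross]
  have hcopqp : IsCoprime (q:ℤ) (p:ℤ) := by
    rw [Nat.isCoprime_iff_coprime]
    exact hpq.symm
  have hdc : (q:ℤ) ∣ c := by
    refine hcopqp.dvd_of_dvd_mul_left ⟨a, ?_⟩
    linarith [hcross]
  have hcq : c = (q:ℤ) := Int.dvd_antisymm hc.le (by positivity) hdq hdc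
  refine ⟨?_, hcq⟩
  have hq0 : (q:ℤ) ≠ 0 := by exact_mod_cast hq.ne'
  have : a * (q:ℤ) = (p:ℤ) * (q:ℤ) := by rw [hcross, hcq]
  exact mul_right_cancel₀ hq0 this

def SM : M2 := ⟨0, 1, -1, 0⟩

theorem mOf_add (x y : ℕ) : mOf (x + y) = ((mOf x).mul SM).mul (mOf y) := by
  ext <;> simp [mOf, M2.mul, SM] <;> push_cast <;> ring

theorem stmt4 (p q : ℕ) (hq : 1 ≤ q) (hpq : q < p) (hco : Nat.Coprime p q)
    (as : List ℕ) (ak : ℕ) (bs : List ℕ) (bl : ℕ)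
    (ha2 : ∀ x ∈ as ++ [ak], 2 ≤ x) (hb2 : ∀ x ∈ bs ++ [bl], 2 ≤ x)
    (hcfa : hjN (as ++ [ak]) = (p : ℚ) / q)
    (hcfb : hjN (bs ++ [bl]) = (p : ℚ) / ((p - q : ℕ) : ℚ)) :
    hjN (as ++ [ak + bl] ++ bs.reverse) = ((p ^ 2 : ℕ) : ℚ) / ((p * q - 1 : ℕ) : ℚ) := by
  have hp2 : 2 ≤ p := by omega
  set A := as ++ [ak] with hA
  set B := bs ++ [bl] with hB
  have hAne : A ≠ [] := by simp [hA]
  have hBne : B ≠ [] := by simp [hB]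
  have hinvA := PM_inv A ha2
  have hinvB := PM_inv B hb2
  have hdetA := PM_det A
  have hdetB := PM_det B
  have hbA := PM_b_neg A ha2 hAne
  have hbB := PM_b_neg B hb2 hBne
  have hcA : 1 ≤ (PM A).c := PM_c_pos A ha2 hAne
  have hcB : 1 ≤ (PM B).c := PM_c_pos B hb2 hBne
  have hcopA : IsCoprime (PM A).a (PM A).c :=
    ⟨(PM A).d, -(PM A).b, by linear_combination hdetA⟩
  have hcopB : IsCoprime (PM B).a (PM B).c :=
    ⟨(PM B).d, -(PM B).b, by linear_combination hdetB⟩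
  have hcoB : Nat.Coprime p (p - q) := by
    have h1 : Nat.gcd p (p - q) ∣ q := by
      have := Nat.dvd_sub (Nat.gcd_dvd_left p (p - q)) (Nat.gcd_dvd_right p (p - q))
      rwa [show p - (p - q) = q by omega] at this
    have h2 : Nat.gcd p (p - q) ∣ Nat.gcd p q :=
      Nat.dvd_gcd (Nat.gcd_dvd_left _ _) h1
    rw [hco] at h2
    exact Nat.dvd_one.mp h2
  obtain ⟨haA, hcA'⟩ := frac_eq (by omega) (by omega) hcopA hco
    ((hjN_eq A ha2).symm.trans hcfa)
  obtain ⟨haB, hcB'⟩ := frac_eq (show 0 < p - q by omega) (by omega) hcopB hcoB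
    ((hjN_eq B hb2).symm.trans hcfb)
  rw [haA, hcA'] at hdetA
  rw [haB, hcB', Nat.cast_sub hpq.le] at hdetB
  -- bounds
  have hxlow : 1 - (p:ℤ) ≤ (PM A).b := by
    have := hinvA.2.2.2.2.1
    rw [haA] at this; linarith
  have hulow : 1 - (p:ℤ) ≤ (PM B).b := by
    have := hinvB.2.2.2.2.1
    rw [haB] at this; linarith
  -- divisibility
  have hkey : (q:ℤ) * ((PM A).b + (PM B).b) = (p:ℤ) * ((PM A).d + (PM B).b - (PM B).d) := by
    linear_combination (-1) * hdetA + hdetB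
  have hcopPQ : IsCoprime (p:ℤ) (q:ℤ) := by
    rw [Nat.isCoprime_iff_coprime]; exact hco
  have hdvd : (p:ℤ) ∣ ((PM A).b + (PM B).b) := by
    refine hcopPQ.dvd_of_dvd_mul_right ⟨(PM A).d + (PM B).b - (PM B).d, ?_⟩
    linarith [hkey]
  have hsum : (PM A).b + (PM B).b = -(p:ℤ) := by
    obtain ⟨k, hk⟩ := hdvd
    have hp0 : (0:ℤ) < p := by exact_mod_cast Nat.zero_lt_of_lt hpq
    have hk1 : k = -1 := by
      rcases lt_trichotomy k (-1) with h | h | h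
      · exfalso
        have hk2 : k ≤ -2 := by omega
        nlinarith
      · exact h
      · exfalso
        have hk2 : 0 ≤ k := by omega
        nlinarith
    rw [hk, hk1]; ring
  -- matrix of the target list
  have hT : PM (as ++ [ak + bl] ++ bs.reverse) = (PM A).mul (SM.mul ((PM B).flip)) := by
    rw [PM_append, PM_append, PM_single, PM_reverse, mOf_add,
      hA, PM_append, PM_single, hB, PM_append, PM_single, M2.flip_mul, flip_mOf]
    simp only [M2.mul_assoc']
  have hT2 : ∀ x ∈ as ++ [ak + bl] ++ bs.reverse, 2 ≤ x := by
    intro x hx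
    simp only [List.mem_append, List.mem_reverse, List.mem_singleton] at hx
    rcases hx with (hx | rfl) | hx
    · exact ha2 x (by simp [hA, hx])
    · have := ha2 ak (by simp [hA]); omega
    · exact hb2 x (by simp [hB, hx])
  have hTa : (PM (as ++ [ak + bl] ++ bs.reverse)).a = (p:ℤ)^2 := by
    rw [hT]
    simp only [M2.mul, M2.flip, SM]
    rw [haA, haB]
    linear_combination (-(p:ℤ)) * hsum
  have hTc : (PM (as ++ [ak + bl] ++ bs.reverse)).c = (p:ℤ) * q - 1 := by
    rw [hT]
    simp only [M2.mul, M2.flip, SM]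
    rw [hcA', haB]
    linear_combination (-(q:ℤ)) * hsum - hdetA
  rw [hjN_eq _ hT2, hTa, hTc]
  have h1pq : 1 ≤ p * q := Nat.mul_pos (by omega) (by omega)
  rw [Nat.cast_sub h1pq]
  push_cast
  ring
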